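/- For every t ∈ ℕ and every C ≥ 0, if Σ_{k=(t−s)_+}^{t−1} ‖x(k+1) − x(k)‖ ≤ C·‖x(t+1) − x(t)‖, then F(x(t+1)) + (1/2)(1/η − L − 2√p·C·L)·‖x(t+1) − x(t)‖² ≤ F(x(t)). -/

import Mathlib

open Filter Topology

section Aux

lemma tel_sum {M : Type*} [AddCommGroup M] (f : ℕ → M) {m n : ℕ} (h : m ≤ n) :
    ∑ k ∈ Finset.Ico m n, (f (k + 1) - f k) = f n - f m := by
  induction n, h using Nat.le_induction with
  | base => simp
  | succ n hmn ih =>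
    rw [Finset.sum_Ico_succ_top (by omega), ih]
    abel

lemma ereal_sum_ne_bot {ι : Type*} (s : Finset ι) (f : ι → EReal)
    (h : ∀ i ∈ s, f i ≠ ⊥) : ∑ i ∈ s, f i ≠ ⊥ := by
  induction s using Finset.cons_induction with
  | empty => simp
  | cons a s ha ih =>
    rw [Finset.sum_cons]
    rw [Ne, EReal.add_eq_bot_iff]
    push_neg
    exact ⟨h a (Finset.mem_cons_self a s), ih fun i hi => h i (Finset.mem_cons_of_mem hi)⟩

lemma ereal_term_ne_top {ι : Type*} [DecidableEq ι] (s : Finset ι) (f : ι → EReal)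
    (hb : ∀ i ∈ s, f i ≠ ⊥) (hs : ∑ i ∈ s, f i ≠ ⊤) : ∀ i ∈ s, f i ≠ ⊤ := by
  intro i hi hc
  apply hs
  rw [← Finset.add_sum_erase _ _ hi, hc]
  exact EReal.top_add_of_ne_bot
    (ereal_sum_ne_bot _ _ fun j hj => hb j (Finset.mem_of_mem_erase hj))

lemma ereal_coe_sum {ι : Type*} (s : Finset ι) (f : ι → ℝ) :
    ((∑ i ∈ s, f i : ℝ) : EReal) = ∑ i ∈ s, ((f i : ℝ) : EReal) := by
  induction s using Finset.cons_induction with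
  | empty => simp
  | cons a s ha ih => rw [Finset.sum_cons, Finset.sum_cons, EReal.coe_add, ih]

lemma pilp_comp_norm_le {ι : Type*} [Fintype ι] {β : ι → Type*}
    [∀ i, SeminormedAddCommGroup (β i)] (u : PiLp 2 β) (i : ι) : ‖u i‖ ≤ ‖u‖ := by
  have h1 : ‖u i‖ ^ 2 ≤ ‖u‖ ^ 2 := by
    rw [PiLp.norm_sq_eq_of_L2]
    exact Finset.single_le_sum (f := fun j => ‖u j‖ ^ 2) (fun j _ => sq_nonneg _) (Finset.mem_univ i)
  have := Real.sqrt_le_sqrt h1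
  rwa [Real.sqrt_sq (norm_nonneg _), Real.sqrt_sq (norm_nonneg _)] at this

lemma pilp_norm_le_norm {ι : Type*} [Fintype ι] {β γ : ι → Type*}
    [∀ i, SeminormedAddCommGroup (β i)] [∀ i, SeminormedAddCommGroup (γ i)]
    (u : PiLp 2 β) (w : PiLp 2 γ) (h : ∀ i, ‖u i‖ ≤ ‖w i‖) : ‖u‖ ≤ ‖w‖ := by
  have h1 : ‖u‖ ^ 2 ≤ ‖w‖ ^ 2 := by
    rw [PiLp.norm_sq_eq_of_L2, PiLp.norm_sq_eq_of_L2]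
    exact Finset.sum_le_sum fun i _ => pow_le_pow_left₀ (norm_nonneg _) (h i) 2
  have := Real.sqrt_le_sqrt h1
  rwa [Real.sqrt_sq (norm_nonneg _), Real.sqrt_sq (norm_nonneg _)] at this

lemma descent_lemma {E : Type*} [NormedAddCommGroup E] [InnerProductSpace ℝ E] [CompleteSpace E]
    (f : E → ℝ) (f' : E → E) (hf : ∀ y, HasGradientAt f (f' y) y)
    (L : ℝ) (hlip : ∀ y z, ‖f' y - f' z‖ ≤ L * ‖y - z‖) (a b : E) :
    f b ≤ f a + (inner ℝ (f' a) (b - a) : ℝ) + L / 2 * ‖b - a‖ ^ 2 := by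
  set Δ := b - a with hΔ
  set ψ : ℝ → ℝ := fun θ =>
    f (a + θ • Δ) - θ * (inner ℝ (f' a) Δ : ℝ) - L / 2 * θ ^ 2 * ‖Δ‖ ^ 2 with hψ
  have hderiv : ∀ θ : ℝ, HasDerivAt ψ
      ((inner ℝ (f' (a + θ • Δ)) Δ : ℝ) - (inner ℝ (f' a) Δ : ℝ) - L * θ * ‖Δ‖ ^ 2) θ := by
    intro θ
    have h1 : HasDerivAt (fun θ : ℝ => a + θ • Δ) Δ θ := by
      simpa using ((hasDerivAt_id θ).smul_const Δ).const_add a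
    have h2 : HasDerivAt (fun θ : ℝ => f (a + θ • Δ)) (inner ℝ (f' (a + θ • Δ)) Δ : ℝ) θ := by
      have := (hf (a + θ • Δ)).hasFDerivAt.comp_hasDerivAt θ h1
      exact this
    have h3 : HasDerivAt (fun θ : ℝ => θ * (inner ℝ (f' a) Δ : ℝ)) (inner ℝ (f' a) Δ : ℝ) θ := by
      simpa using (hasDerivAt_id θ).mul_const (inner ℝ (f' a) Δ : ℝ)
    have h4 : HasDerivAt (fun θ : ℝ => L / 2 * θ ^ 2 * ‖Δ‖ ^ 2) (L * θ * ‖Δ‖ ^ 2) θ := by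
      have := ((hasDerivAt_pow 2 θ).const_mul (L / 2)).mul_const (‖Δ‖ ^ 2)
      exact this.congr_deriv (by rw [show (2:ℕ) - 1 = 1 from rfl, pow_one]; push_cast; ring)
    exact (h2.sub h3).sub h4
  have hanti : AntitoneOn ψ (Set.Icc (0 : ℝ) 1) := by
    apply antitoneOn_of_deriv_nonpos (convex_Icc 0 1)
    · exact Continuous.continuousOn (by
        apply continuous_iff_continuousAt.2
        exact fun θ => (hderiv θ).differentiableAt.continuousAt)
    · intro θ _
      exact (hderiv θ).differentiableAt.differentiableWithinAt
    · intro θ hθ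
      rw [interior_Icc] at hθ
      rw [(hderiv θ).deriv]
      have hdist : ‖(a + θ • Δ) - a‖ = θ * ‖Δ‖ := by
        rw [add_sub_cancel_left, norm_smul, Real.norm_eq_abs, abs_of_pos hθ.1]
      have hb1 : (inner ℝ (f' (a + θ • Δ)) Δ : ℝ) - (inner ℝ (f' a) Δ : ℝ) ≤ L * θ * ‖Δ‖ ^ 2 := by
        have h5 : (inner ℝ (f' (a + θ • Δ)) Δ : ℝ) - (inner ℝ (f' a) Δ : ℝ)
            = (inner ℝ (f' (a + θ • Δ) - f' a) Δ : ℝ) := by rw [inner_sub_left]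
        rw [h5]
        calc (inner ℝ (f' (a + θ • Δ) - f' a) Δ : ℝ) ≤ ‖f' (a + θ • Δ) - f' a‖ * ‖Δ‖ :=
              real_inner_le_norm _ _
          _ ≤ (L * ‖(a + θ • Δ) - a‖) * ‖Δ‖ := by
              apply mul_le_mul_of_nonneg_right (hlip _ _) (norm_nonneg _)
          _ = L * θ * ‖Δ‖ ^ 2 := by rw [hdist]; ring
      linarith
  have h01 := hanti (Set.mem_Icc.2 ⟨le_refl 0, zero_le_one⟩)
    (Set.mem_Icc.2 ⟨zero_le_one, le_refl 1⟩) zero_le_one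
  have hψ0 : ψ 0 = f a := by simp [hψ]
  have hψ1 : ψ 1 = f b - (inner ℝ (f' a) Δ : ℝ) - L / 2 * ‖Δ‖ ^ 2 := by
    simp [hψ, hΔ]
  rw [hψ0, hψ1] at h01
  linarith

end Aux

noncomputable abbrev EE (p : ℕ) (d : Fin p → ℕ) : Type :=
  PiLp 2 (fun i : Fin p => EuclideanSpace ℝ (Fin (d i)))
theorem stmt_16
    (p s : ℕ) (hp : 1 ≤ p) (d : Fin p → ℕ) (hd : ∀ i, 1 ≤ d i)
    (τ : Fin p → Fin p → ℕ → ℕ)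
    (hτ_le : ∀ i j t, τ i j t ≤ t)
    (hτ_ge : ∀ i j t, t ≤ τ i j t + s)
    (hτ_self : ∀ i t, τ i i t = t)
    (x : (i : Fin p) → ℕ → EuclideanSpace ℝ (Fin (d i)))
    (X : ℕ → EE p d) (hX : ∀ t i, X t i = x i t)
    (Xl : Fin p → ℕ → EE p d) (hXl : ∀ i t j, Xl i t j = x j (τ i j t))
    (T : Fin p → Set ℕ)
    (hT : ∀ i t, ∃ k ∈ T i, t ≤ k ∧ k ≤ t + s)
    (η L : ℝ) (hη : 0 < η) (hL : 0 < L)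
    (f : EE p d → ℝ) (f' : EE p d → EE p d)
    (hf : ∀ y, HasGradientAt f (f' y) y)
    (hlip : ∀ y z, ‖f' y - f' z‖ ≤ L * ‖y - z‖)
    (g : (i : Fin p) → EuclideanSpace ℝ (Fin (d i)) → EReal)
    (hg_nebot : ∀ i z, g i z ≠ ⊥)
    (hg_proper : ∀ i, ∃ z, g i z ≠ ⊤)
    (hg_lsc : ∀ i, LowerSemicontinuous (g i))
    (F : EE p d → EReal)
    (hF : ∀ y, F y = (f y : EReal) + ∑ i, g i (y i))
    (hF_bdd : ∃ m : ℝ, ∀ y, (m : EReal) ≤ F y)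
    (hF0 : F (X 0) < ⊤)
    (hskip : ∀ i t, t ∉ T i → x i (t + 1) = x i t)
    (hupd : ∀ i t, t ∈ T i → ∀ z : EuclideanSpace ℝ (Fin (d i)),
      g i (x i (t + 1)) +
        ((1 / (2 * η) * ‖x i (t + 1) - (x i t - η • f' (Xl i t) i)‖ ^ 2 : ℝ) : EReal)
      ≤ g i z + ((1 / (2 * η) * ‖z - (x i t - η • f' (Xl i t) i)‖ ^ 2 : ℝ) : EReal))
    :
    ∀ (t : ℕ) (C : ℝ), 0 ≤ C →
      (∑ k ∈ Finset.Ico (t - s) t, ‖X (k + 1) - X k‖) ≤ C * ‖X (t + 1) - X t‖ →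
      F (X (t + 1)) +
        ((1 / 2 * (1 / η - L - 2 * Real.sqrt p * C * L) * ‖X (t + 1) - X t‖ ^ 2 : ℝ) : EReal)
      ≤ F (X t) := by
  intro t C hC hsum
  by_cases htop : F (X t) = ⊤
  · rw [htop]; exact le_top
  -- component identities
  have hΔk : ∀ (k : ℕ) (i : Fin p), (X (k + 1) - X k) i = x i (k + 1) - x i k := by
    intro k i; rw [PiLp.sub_apply, hX, hX]
  have hnormΔ : ∑ i, ‖x i (t + 1) - x i t‖ ^ 2 = ‖X (t + 1) - X t‖ ^ 2 := by
    rw [PiLp.norm_sq_eq_of_L2]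
    exact Finset.sum_congr rfl fun i _ => by rw [hΔk]
  -- finiteness of g at time t
  have hFt : F (X t) = (f (X t) : EReal) + ∑ i, g i (x i t) := by
    rw [hF]; congr 1; exact Finset.sum_congr rfl fun i _ => by rw [hX]
  have hsum_ne_top : (∑ i, g i (x i t)) ≠ ⊤ := by
    intro hc
    exact htop (by rw [hFt, hc, EReal.add_top_of_ne_bot (EReal.coe_ne_bot _)])
  have hgt_ne_top : ∀ i, g i (x i t) ≠ ⊤ := fun i =>
    ereal_term_ne_top Finset.univ _ (fun j _ => hg_nebot j _) hsum_ne_top i (Finset.mem_univ i)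
  -- key per-coordinate inequality
  have key : ∀ i : Fin p, g i (x i (t + 1)) ≠ ⊤ ∧
      (g i (x i (t + 1))).toReal + 1 / (2 * η) * ‖x i (t + 1) - x i t‖ ^ 2
        + (inner ℝ (x i (t + 1) - x i t) (f' (Xl i t) i) : ℝ) ≤ (g i (x i t)).toReal := by
    intro i
    by_cases hiT : t ∈ T i
    · have h := hupd i t hiT (x i t)
      have e1 : x i (t + 1) - (x i t - η • f' (Xl i t) i)
          = (x i (t + 1) - x i t) + η • f' (Xl i t) i := by abel
      have e2 : x i t - (x i t - η • f' (Xl i t) i) = η • f' (Xl i t) i := by abel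
      rw [e1, e2] at h
      rw [(EReal.coe_toReal (hgt_ne_top i) (hg_nebot i _)).symm, ← EReal.coe_add] at h
      have hnewne : g i (x i (t + 1)) ≠ ⊤ := by
        intro hc
        rw [hc, EReal.top_add_coe] at h
        exact (EReal.coe_lt_top _).not_ge h
      rw [(EReal.coe_toReal hnewne (hg_nebot i _)).symm, ← EReal.coe_add] at h
      have hr := EReal.coe_le_coe_iff.1 h
      have hexp : ‖(x i (t + 1) - x i t) + η • f' (Xl i t) i‖ ^ 2
          = ‖x i (t + 1) - x i t‖ ^ 2
            + 2 * η * (inner ℝ (x i (t + 1) - x i t) (f' (Xl i t) i) : ℝ)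
            + η ^ 2 * ‖f' (Xl i t) i‖ ^ 2 := by
        rw [norm_add_sq_real, real_inner_smul_right, norm_smul, Real.norm_eq_abs,
          abs_of_pos hη, mul_pow]
        ring
      have hexp2 : ‖η • f' (Xl i t) i‖ ^ 2 = η ^ 2 * ‖f' (Xl i t) i‖ ^ 2 := by
        rw [norm_smul, Real.norm_eq_abs, abs_of_pos hη, mul_pow]
      rw [hexp, hexp2] at hr
      refine ⟨hnewne, ?_⟩
      have hηne : η ≠ 0 := ne_of_gt hη
      have hdist : 1 / (2 * η) * (‖x i (t + 1) - x i t‖ ^ 2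
            + 2 * η * (inner ℝ (x i (t + 1) - x i t) (f' (Xl i t) i) : ℝ)
            + η ^ 2 * ‖f' (Xl i t) i‖ ^ 2)
          = 1 / (2 * η) * ‖x i (t + 1) - x i t‖ ^ 2
            + (inner ℝ (x i (t + 1) - x i t) (f' (Xl i t) i) : ℝ)
            + 1 / (2 * η) * (η ^ 2 * ‖f' (Xl i t) i‖ ^ 2) := by
        field_simp
      rw [hdist] at hr
      linarith
    · have hxeq := hskip i t hiT
      rw [hxeq]
      exact ⟨hgt_ne_top i, by simp⟩
  -- summed inequality
  have hsum_ineq : (∑ i, (g i (x i (t + 1))).toReal)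
      + 1 / (2 * η) * ‖X (t + 1) - X t‖ ^ 2
      + (∑ i, (inner ℝ (x i (t + 1) - x i t) (f' (Xl i t) i) : ℝ))
      ≤ ∑ i, (g i (x i t)).toReal := by
    have h := Finset.sum_le_sum (fun i (_ : i ∈ Finset.univ) => (key i).2)
    rw [Finset.sum_add_distrib, Finset.sum_add_distrib, ← Finset.mul_sum, hnormΔ] at h
    exact h
  -- descent lemma
  have hdesc := descent_lemma f f' hf L hlip (X t) (X (t + 1))
  have hIP2 : (inner ℝ (f' (X t)) (X (t + 1) - X t) : ℝ)
      = ∑ i, (inner ℝ (f' (X t) i) ((X (t + 1) - X t) i) : ℝ) := PiLp.inner_apply _ _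
  -- delay bound
  have hdelay : ∀ i, ‖X t - Xl i t‖ ≤ ∑ k ∈ Finset.Ico (t - s) t, ‖X (k + 1) - X k‖ := by
    intro i
    set v : ℕ → EE p d := fun k =>
      (WithLp.equiv 2 (∀ j, EuclideanSpace ℝ (Fin (d j)))).symm
        (fun j => x j (max (τ i j t) k)) with hv
    have hv_apply : ∀ k j, v k j = x j (max (τ i j t) k) := fun k j => rfl
    have hv_top : v t = X t := by
      refine PiLp.ext fun j => ?_
      rw [hv_apply, max_eq_right (hτ_le i j t), hX]
    have hv_bot : v (t - s) = Xl i t := by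
      refine PiLp.ext fun j => ?_
      rw [hv_apply, max_eq_left (by have := hτ_ge i j t; omega), hXl]
    have htel : X t - Xl i t = ∑ k ∈ Finset.Ico (t - s) t, (v (k + 1) - v k) := by
      rw [tel_sum v (Nat.sub_le t s), hv_top, hv_bot]
    rw [htel]
    refine (norm_sum_le _ _).trans (Finset.sum_le_sum fun k _ => ?_)
    apply pilp_norm_le_norm
    intro j
    rw [PiLp.sub_apply, hv_apply, hv_apply, hΔk]
    rcases le_or_gt (τ i j t) k with h | h
    · rw [max_eq_right h, max_eq_right (h.trans (Nat.le_succ k))]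
    · rw [max_eq_left h, max_eq_left (by omega), sub_self, norm_zero]
      exact norm_nonneg _
  -- bound on gradient error components
  have hei : ∀ i, ‖f' (X t) i - f' (Xl i t) i‖ ≤ L * C * ‖X (t + 1) - X t‖ := by
    intro i
    calc ‖f' (X t) i - f' (Xl i t) i‖ = ‖(f' (X t) - f' (Xl i t)) i‖ := by
          rw [PiLp.sub_apply]
      _ ≤ ‖f' (X t) - f' (Xl i t)‖ := pilp_comp_norm_le _ i
      _ ≤ L * ‖X t - Xl i t‖ := hlip _ _
      _ ≤ L * C * ‖X (t + 1) - X t‖ := by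
          rw [mul_assoc]
          exact mul_le_mul_of_nonneg_left ((hdelay i).trans hsum) hL.le
  -- cross term bound via Cauchy-Schwarz
  have hcross : ∑ i, (inner ℝ ((X (t + 1) - X t) i) (f' (X t) i - f' (Xl i t) i) : ℝ)
      ≤ Real.sqrt p * (L * C) * ‖X (t + 1) - X t‖ ^ 2 := by
    calc ∑ i, (inner ℝ ((X (t + 1) - X t) i) (f' (X t) i - f' (Xl i t) i) : ℝ)
        ≤ ∑ i, ‖(X (t + 1) - X t) i‖ * ‖f' (X t) i - f' (Xl i t) i‖ :=
          Finset.sum_le_sum fun i _ => real_inner_le_norm _ _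
      _ ≤ Real.sqrt (∑ i, ‖(X (t + 1) - X t) i‖ ^ 2)
            * Real.sqrt (∑ i, ‖f' (X t) i - f' (Xl i t) i‖ ^ 2) :=
          Real.sum_mul_le_sqrt_mul_sqrt _ _ _
      _ ≤ ‖X (t + 1) - X t‖ * (Real.sqrt p * (L * C * ‖X (t + 1) - X t‖)) := by
          have h1 : Real.sqrt (∑ i, ‖(X (t + 1) - X t) i‖ ^ 2) = ‖X (t + 1) - X t‖ := by
            rw [← PiLp.norm_sq_eq_of_L2, Real.sqrt_sq (norm_nonneg _)]
          have h2 : Real.sqrt (∑ i, ‖f' (X t) i - f' (Xl i t) i‖ ^ 2)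
              ≤ Real.sqrt p * (L * C * ‖X (t + 1) - X t‖) := by
            have hb : ∑ i, ‖f' (X t) i - f' (Xl i t) i‖ ^ 2
                ≤ (p : ℝ) * (L * C * ‖X (t + 1) - X t‖) ^ 2 := by
              calc ∑ i, ‖f' (X t) i - f' (Xl i t) i‖ ^ 2
                  ≤ ∑ _i : Fin p, (L * C * ‖X (t + 1) - X t‖) ^ 2 :=
                    Finset.sum_le_sum fun i _ =>
                      pow_le_pow_left₀ (norm_nonneg _) (by simpa [mul_assoc] using hei i) 2
                _ = (p : ℝ) * (L * C * ‖X (t + 1) - X t‖) ^ 2 := by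
                    simp [Finset.sum_const, nsmul_eq_mul]
            calc Real.sqrt (∑ i, ‖f' (X t) i - f' (Xl i t) i‖ ^ 2)
                ≤ Real.sqrt ((p : ℝ) * (L * C * ‖X (t + 1) - X t‖) ^ 2) := Real.sqrt_le_sqrt hb
              _ = Real.sqrt p * (L * C * ‖X (t + 1) - X t‖) := by
                  rw [Real.sqrt_mul (Nat.cast_nonneg p),
                    Real.sqrt_sq (by positivity)]
          rw [h1]
          exact mul_le_mul_of_nonneg_left h2 (norm_nonneg _)
      _ = Real.sqrt p * (L * C) * ‖X (t + 1) - X t‖ ^ 2 := by ring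
  -- relate the two inner product sums
  have hdiff : (inner ℝ (f' (X t)) (X (t + 1) - X t) : ℝ)
      - (∑ i, (inner ℝ (x i (t + 1) - x i t) (f' (Xl i t) i) : ℝ))
      = ∑ i, (inner ℝ ((X (t + 1) - X t) i) (f' (X t) i - f' (Xl i t) i) : ℝ) := by
    rw [hIP2, ← Finset.sum_sub_distrib]
    refine Finset.sum_congr rfl fun i _ => ?_
    rw [inner_sub_right, real_inner_comm (f' (X t) i), hΔk]
  -- final EReal manipulation
  have hFt1 : F (X (t + 1)) = ((f (X (t + 1)) + ∑ i, (g i (x i (t + 1))).toReal : ℝ) : EReal) := by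
    rw [hF, EReal.coe_add, ereal_coe_sum]
    congr 1
    refine Finset.sum_congr rfl fun i _ => ?_
    rw [hX, EReal.coe_toReal (key i).1 (hg_nebot i _)]
  have hFt' : F (X t) = ((f (X t) + ∑ i, (g i (x i t)).toReal : ℝ) : EReal) := by
    rw [hFt, EReal.coe_add, ereal_coe_sum]
    congr 1
    exact (Finset.sum_congr rfl fun i _ => (EReal.coe_toReal (hgt_ne_top i) (hg_nebot i _)).symm)
  rw [hFt1, hFt', ← EReal.coe_add, EReal.coe_le_coe_iff]
  -- final real arithmetic
  have hhalf : 1 / 2 * (1 / η - L - 2 * Real.sqrt p * C * L)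
      = 1 / (2 * η) - L / 2 - Real.sqrt p * (L * C) := by
    field_simp
  nlinarith [hsum_ineq, hdesc, hcross, hdiff, sq_nonneg ‖X (t + 1) - X t‖]
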